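/- arXiv:1908.03713 — 3 statements merged into one kernel-verified Lean document; each statement's English description precedes it below -/
import Mathlib

section
/- Let A, B be real symmetric d×d matrices. Then ⟨Av,v⟩ > 0 for all nonzero v ∈ ℝ^d with ⟨Bv,v⟩ = 0 if and only if there exists x ∈ ℝ such that A + xB is positive definite. -/
open Matrix

/-- Quadratic form scaling. -/
lemma finsler_quad_smul {d : ℕ} (M : Matrix (Fin d) (Fin d) ℝ) (c : ℝ) (v : Fin d → ℝ) :
    M.mulVec (c • v) ⬝ᵥ (c • v) = c ^ 2 * (M.mulVec v ⬝ᵥ v) := by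
  rw [mulVec_smul, smul_dotProduct, dotProduct_smul, smul_eq_mul, smul_eq_mul]; ring

lemma finsler_quad_expand {d : ℕ} (M : Matrix (Fin d) (Fin d) ℝ) (t : ℝ) (u w : Fin d → ℝ) :
    M.mulVec (t • u + w) ⬝ᵥ (t • u + w) =
      t ^ 2 * (M.mulVec u ⬝ᵥ u) + t * (M.mulVec u ⬝ᵥ w + M.mulVec w ⬝ᵥ u) + M.mulVec w ⬝ᵥ w := by
  simp only [mulVec_add, mulVec_smul, dotProduct_add, add_dotProduct, smul_dotProduct,
    dotProduct_smul, smul_eq_mul]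
  ring

lemma finsler_cont {d : ℕ} (M : Matrix (Fin d) (Fin d) ℝ) :
    Continuous (fun v : Fin d → ℝ => M.mulVec v ⬝ᵥ v) := by
  simp only [mulVec, dotProduct]
  exact continuous_finset_sum _ fun i _ =>
    (continuous_finset_sum _ fun j _ => (continuous_const.mul (continuous_apply j))).mul
      (continuous_apply i)

lemma finsler_normalize {d : ℕ} (M : Matrix (Fin d) (Fin d) ℝ) (v : Fin d → ℝ) (hv : v ≠ 0) :
    M.mulVec v ⬝ᵥ v = ‖v‖ ^ 2 * (M.mulVec (‖v‖⁻¹ • v) ⬝ᵥ (‖v‖⁻¹ • v)) := by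
  have hn : ‖v‖ ≠ 0 := norm_ne_zero_iff.2 hv
  have h := finsler_quad_smul M ‖v‖ (‖v‖⁻¹ • v)
  rwa [smul_inv_smul₀ hn] at h

lemma finsler_norm_one {d : ℕ} (v : Fin d → ℝ) (hv : v ≠ 0) : ‖(‖v‖⁻¹ • v)‖ = 1 := by
  have hn : ‖v‖ ≠ 0 := norm_ne_zero_iff.2 hv
  rw [norm_smul, norm_inv, norm_norm, inv_mul_cancel₀ hn]

lemma finsler_quadaux (p q r a b c : ℝ) (hp : 0 < p) (hr : r < 0)
    (H : ∀ t : ℝ, p * t ^ 2 + q * t + r = 0 → 0 < a * t ^ 2 + b * t + c) :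
    a * r < c * p := by
  have hpne : p ≠ 0 := ne_of_gt hp
  have hD : 0 < q ^ 2 - 4 * p * r := by nlinarith
  set s := Real.sqrt (q ^ 2 - 4 * p * r) with hsdef
  have hs : s ^ 2 = q ^ 2 - 4 * p * r := Real.sq_sqrt hD.le
  have hspos : 0 < s := Real.sqrt_pos.2 hD
  have hsq1 : q < s := by nlinarith
  have hsq2 : -q < s := by nlinarith
  set t1 := (-q + s) / (2 * p) with ht1def
  set t2 := (-q - s) / (2 * p) with ht2def
  have ht1pos : 0 < t1 := div_pos (by linarith) (by linarith)
  have ht2neg : t2 < 0 := div_neg_of_neg_of_pos (by linarith) (by linarith)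
  have root1 : p * t1 ^ 2 + q * t1 + r = 0 := by
    rw [ht1def]; field_simp; linear_combination hs
  have root2 : p * t2 ^ 2 + q * t2 + r = 0 := by
    rw [ht2def]; field_simp; linear_combination hs
  have hprod : p * (t1 * t2) = r := by
    rw [ht1def, ht2def]; field_simp; linear_combination (-1) * hs
  have F1 := H t1 root1
  have F2 := H t2 root2
  have hgap : 0 < (t1 - t2) * (c - a * (t1 * t2)) := by
    have h1 := mul_pos (neg_pos.2 ht2neg) F1
    have h2 := mul_pos ht1pos F2
    nlinarith
  have hsub : 0 < t1 - t2 := by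
    have hsp : 0 < s / p := div_pos hspos hp
    have : t1 - t2 = s / p := by rw [ht1def, ht2def]; field_simp; ring
    linarith [this ▸ hsp]
  have hca : 0 < c - a * (t1 * t2) := by
    by_contra hle
    push_neg at hle
    nlinarith [mul_nonneg hsub.le (neg_nonneg.2 hle)]
  rw [← hprod]
  nlinarith [mul_pos hp hca]

/-- Key two-dimensional comparison (Dines-type). -/
lemma finsler_key {d : ℕ} (A B : Matrix (Fin d) (Fin d) ℝ)
    (H : ∀ v : Fin d → ℝ, v ≠ 0 → B.mulVec v ⬝ᵥ v = 0 → 0 < A.mulVec v ⬝ᵥ v)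
    {u w : Fin d → ℝ} (hu : 0 < B.mulVec u ⬝ᵥ u) (hw : B.mulVec w ⬝ᵥ w < 0) :
    (A.mulVec u ⬝ᵥ u) * (B.mulVec w ⬝ᵥ w) < (A.mulVec w ⬝ᵥ w) * (B.mulVec u ⬝ᵥ u) := by
  refine finsler_quadaux _ (B.mulVec u ⬝ᵥ w + B.mulVec w ⬝ᵥ u) _ _
    (A.mulVec u ⬝ᵥ w + A.mulVec w ⬝ᵥ u) _ hu hw ?_
  intro t ht
  have hne : t • u + w ≠ 0 := by
    intro h0
    have hwu : w = (-t) • u := by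
      rw [neg_smul]; exact eq_neg_of_add_eq_zero_right h0
    rw [hwu, finsler_quad_smul] at hw
    nlinarith
  have hg : B.mulVec (t • u + w) ⬝ᵥ (t • u + w) = 0 := by
    rw [finsler_quad_expand]; linear_combination ht
  have := H (t • u + w) hne hg
  rw [finsler_quad_expand] at this
  linarith

lemma finsler_ratio_lt {a p c r : ℝ} (hp : 0 < p) (hr : r < 0) (h : a * r < c * p) :
    -a / p < -c / r := by
  have h2 : -c / r = c / (-r) := by rw [div_neg, neg_div]
  rw [h2, div_lt_div_iff₀ hp (neg_pos.2 hr)]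
  nlinarith

lemma finsler_ratio_lt_negneg {a r c p : ℝ} (hr : r < 0) (hp : p < 0)
    (h : c * r - a * p < 0) : -a / r < -c / p := by
  have e1 : -a / r = a / (-r) := by rw [div_neg, neg_div]
  have e2 : -c / p = c / (-p) := by rw [div_neg, neg_div]
  rw [e1, e2, div_lt_div_iff₀ (neg_pos.2 hr) (neg_pos.2 hp)]
  nlinarith

lemma finsler_ratio_lt_pospos {a p c r : ℝ} (hp : 0 < p) (hr : 0 < r)
    (h : 0 < a * r - c * p) : -a / p < -c / r := by
  rw [div_lt_div_iff₀ hp hr]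
  nlinarith

/-- Reduction to the unit sphere. -/
lemma finsler_scale {d : ℕ} (A B : Matrix (Fin d) (Fin d) ℝ) (x : ℝ)
    (h : ∀ v : Fin d → ℝ, ‖v‖ = 1 → 0 < A.mulVec v ⬝ᵥ v + x * (B.mulVec v ⬝ᵥ v)) :
    ∀ v : Fin d → ℝ, v ≠ 0 → 0 < A.mulVec v ⬝ᵥ v + x * (B.mulVec v ⬝ᵥ v) := by
  intro v hv
  have hn : ‖v‖ ≠ 0 := norm_ne_zero_iff.2 hv
  have hn2 : 0 < ‖v‖ ^ 2 := by positivity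
  have h1 := h (‖v‖⁻¹ • v) (finsler_norm_one v hv)
  rw [finsler_normalize A v hv, finsler_normalize B v hv]
  nlinarith [mul_pos hn2 h1]

/-- The case where `g` is nonnegative everywhere. -/
lemma finsler_oneSigned {d : ℕ} (A B : Matrix (Fin d) (Fin d) ℝ)
    (H : ∀ v : Fin d → ℝ, v ≠ 0 → B.mulVec v ⬝ᵥ v = 0 → 0 < A.mulVec v ⬝ᵥ v)
    (hg : ∀ v : Fin d → ℝ, 0 ≤ B.mulVec v ⬝ᵥ v) :
    ∃ x : ℝ, ∀ v : Fin d → ℝ, v ≠ 0 → 0 < A.mulVec v ⬝ᵥ v + x * (B.mulVec v ⬝ᵥ v) := by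
  set f : (Fin d → ℝ) → ℝ := fun v => A.mulVec v ⬝ᵥ v with hfdef
  set g : (Fin d → ℝ) → ℝ := fun v => B.mulVec v ⬝ᵥ v with hgdef
  set T : Set (Fin d → ℝ) := {v | ‖v‖ = 1 ∧ f v ≤ 0} with hTdef
  have hTc : IsCompact T := by
    have hTeq : T = Metric.sphere (0 : Fin d → ℝ) 1 ∩ {v | f v ≤ 0} := by
      ext v
      simp [hTdef, mem_sphere_zero_iff_norm]
    rw [hTeq]
    exact (isCompact_sphere _ _).inter_right (isClosed_le (finsler_cont A) continuous_const)
  by_cases hT : T.Nonempty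
  · obtain ⟨vδ, hvδT, hδmin⟩ := hTc.exists_isMinOn hT (finsler_cont B).continuousOn
    obtain ⟨vm, hvmT, hmmin⟩ := hTc.exists_isMinOn hT (finsler_cont A).continuousOn
    have hδpos : 0 < g vδ := by
      rcases (hg vδ).lt_or_eq with h | h
      · exact h
      · exfalso
        have hvδne : vδ ≠ 0 := by
          intro h0; rw [h0] at hvδT; simpa using hvδT.1
        have := H vδ hvδne h.symm
        exact absurd hvδT.2 (by simpa [hfdef] using this.not_ge)
    have hm0 : f vm ≤ 0 := hvmT.2
    have hxpos : 0 < (1 - f vm) / g vδ := div_pos (by linarith) hδpos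
    refine ⟨(1 - f vm) / g vδ, finsler_scale A B _ ?_⟩
    intro v hv1
    by_cases hfv : f v ≤ 0
    · have hvT : v ∈ T := ⟨hv1, hfv⟩
      have h1 : g vδ ≤ g v := hδmin hvT
      have h2 : f vm ≤ f v := hmmin hvT
      have hx : (1 - f vm) / g vδ * g vδ = 1 - f vm := div_mul_cancel₀ _ (ne_of_gt hδpos)
      have h3 : (1 - f vm) / g vδ * g vδ ≤ (1 - f vm) / g vδ * g v :=
        mul_le_mul_of_nonneg_left h1 hxpos.le
      show 0 < f v + (1 - f vm) / g vδ * g v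
      nlinarith
    · push_neg at hfv
      have h4 : 0 ≤ (1 - f vm) / g vδ * g v := mul_nonneg hxpos.le (hg v)
      show 0 < f v + (1 - f vm) / g vδ * g v
      linarith
  · refine ⟨0, finsler_scale A B 0 ?_⟩
    intro v hv1
    have hvnT : v ∉ T := fun h => hT ⟨v, h⟩
    have : ¬ (‖v‖ = 1 ∧ f v ≤ 0) := hvnT
    push_neg at this
    have := this hv1
    show 0 < f v + 0 * g v
    linarith

/-- The full construction of `x`. -/
lemma finsler_exists {d : ℕ} (A B : Matrix (Fin d) (Fin d) ℝ)
    (H : ∀ v : Fin d → ℝ, v ≠ 0 → B.mulVec v ⬝ᵥ v = 0 → 0 < A.mulVec v ⬝ᵥ v) :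
    ∃ x : ℝ, ∀ v : Fin d → ℝ, v ≠ 0 → 0 < A.mulVec v ⬝ᵥ v + x * (B.mulVec v ⬝ᵥ v) := by
  set f : (Fin d → ℝ) → ℝ := fun v => A.mulVec v ⬝ᵥ v with hfdef
  set g : (Fin d → ℝ) → ℝ := fun v => B.mulVec v ⬝ᵥ v with hgdef
  by_cases hP : ∃ u, 0 < g u
  · by_cases hN : ∃ w, g w < 0
    · -- both signs occur
      obtain ⟨u₀, hu₀⟩ := hP
      obtain ⟨w₀, hw₀⟩ := hN
      have hu₀ne : u₀ ≠ 0 := by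
        intro h; rw [h] at hu₀; simp [hgdef] at hu₀
      have hw₀ne : w₀ ≠ 0 := by
        intro h; rw [h] at hw₀; simp [hgdef] at hw₀
      set u₁ := ‖u₀‖⁻¹ • u₀ with hu₁def
      set w₁ := ‖w₀‖⁻¹ • w₀ with hw₁def
      have hu₁norm : ‖u₁‖ = 1 := finsler_norm_one u₀ hu₀ne
      have hw₁norm : ‖w₁‖ = 1 := finsler_norm_one w₀ hw₀ne
      have hn2u : 0 < ‖u₀‖ ^ 2 := pow_pos (norm_pos_iff.2 hu₀ne) 2
      have hn2w : 0 < ‖w₀‖ ^ 2 := pow_pos (norm_pos_iff.2 hw₀ne) 2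
      have hgu₁ : 0 < g u₁ := by
        have hh : g u₀ = ‖u₀‖ ^ 2 * g u₁ := finsler_normalize B u₀ hu₀ne
        nlinarith [hu₀, hh, hn2u]
      have hgw₁ : g w₁ < 0 := by
        have hh : g w₀ = ‖w₀‖ ^ 2 * g w₁ := finsler_normalize B w₀ hw₀ne
        nlinarith [hw₀, hh, hn2w]
      -- compact pieces of the sphere
      set KP : Set (Fin d → ℝ) := {v | ‖v‖ = 1 ∧ 0 ≤ g v ∧ f v * g u₁ - f u₁ * g v ≤ 0}
        with hKPdef
      set KN : Set (Fin d → ℝ) := {v | ‖v‖ = 1 ∧ g v ≤ 0 ∧ 0 ≤ f v * g w₁ - f w₁ * g v}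
        with hKNdef
      have hKPc : IsCompact KP := by
        have : KP = Metric.sphere (0 : Fin d → ℝ) 1 ∩
            ({v | 0 ≤ g v} ∩ {v | f v * g u₁ - f u₁ * g v ≤ 0}) := by
          ext v; simp [hKPdef, mem_sphere_zero_iff_norm, and_assoc]
        rw [this]
        exact (isCompact_sphere _ _).inter_right
          ((isClosed_le continuous_const (finsler_cont B)).inter
            (isClosed_le (((finsler_cont A).mul continuous_const).sub
              (continuous_const.mul (finsler_cont B))) continuous_const))
      have hKNc : IsCompact KN := by
        have : KN = Metric.sphere (0 : Fin d → ℝ) 1 ∩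
            ({v | g v ≤ 0} ∩ {v | 0 ≤ f v * g w₁ - f w₁ * g v}) := by
          ext v; simp [hKNdef, mem_sphere_zero_iff_norm, and_assoc]
        rw [this]
        exact (isCompact_sphere _ _).inter_right
          ((isClosed_le (finsler_cont B) continuous_const).inter
            (isClosed_le continuous_const (((finsler_cont A).mul continuous_const).sub
              (continuous_const.mul (finsler_cont B)))))
      have hne_of_norm : ∀ v : Fin d → ℝ, ‖v‖ = 1 → v ≠ 0 := by
        intro v hv h0; rw [h0] at hv; simp at hv
      have gposKP : ∀ v ∈ KP, 0 < g v := by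
        rintro v ⟨h1, h2, h3⟩
        rcases h2.lt_or_eq with h | h
        · exact h
        · exfalso
          have hfv : 0 < f v := H v (hne_of_norm v h1) h.symm
          rw [← h] at h3
          nlinarith
      have gnegKN : ∀ v ∈ KN, g v < 0 := by
        rintro v ⟨h1, h2, h3⟩
        rcases h2.lt_or_eq with h | h
        · exact h
        · exfalso
          have hfv : 0 < f v := H v (hne_of_norm v h1) h
          rw [h] at h3
          nlinarith
      have hu₁KP : u₁ ∈ KP := ⟨hu₁norm, hgu₁.le, le_of_eq (by ring)⟩
      have hw₁KN : w₁ ∈ KN := ⟨hw₁norm, hgw₁.le, le_of_eq (by ring)⟩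
      set φ : (Fin d → ℝ) → ℝ := fun v => -f v / g v with hφdef
      have hφcontP : ContinuousOn φ KP :=
        ((finsler_cont A).neg.continuousOn).div (finsler_cont B).continuousOn
          fun v hv => (gposKP v hv).ne'
      have hφcontN : ContinuousOn φ KN :=
        ((finsler_cont A).neg.continuousOn).div (finsler_cont B).continuousOn
          fun v hv => (gnegKN v hv).ne
      obtain ⟨uS, huSKP, humax⟩ := hKPc.exists_isMaxOn ⟨u₁, hu₁KP⟩ hφcontP
      obtain ⟨wS, hwSKN, hwmin⟩ := hKNc.exists_isMinOn ⟨w₁, hw₁KN⟩ hφcontN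
      have hguS : 0 < g uS := gposKP uS huSKP
      have hgwS : g wS < 0 := gnegKN wS hwSKN
      -- ratio on positive side is bounded by φ uS
      have claimA : ∀ v : Fin d → ℝ, v ≠ 0 → 0 < g v → φ v ≤ φ uS := by
        intro v hv hgv
        set v₁ := ‖v‖⁻¹ • v with hv₁def
        have hfn : f v = ‖v‖ ^ 2 * f v₁ := finsler_normalize A v hv
        have hgn : g v = ‖v‖ ^ 2 * g v₁ := finsler_normalize B v hv
        have hn2 : 0 < ‖v‖ ^ 2 := pow_pos (norm_pos_iff.2 hv) 2
        have hgv₁ : 0 < g v₁ := by nlinarith [hgv, hgn]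
        have hratio : φ v = φ v₁ := by
          show -f v / g v = -f v₁ / g v₁
          rw [hfn, hgn, show -(‖v‖ ^ 2 * f v₁) = ‖v‖ ^ 2 * (-f v₁) by ring,
            mul_div_mul_left _ _ (ne_of_gt hn2)]
        rw [hratio]
        by_cases hmem : v₁ ∈ KP
        · exact humax hmem
        · have hnorm₁ : ‖v₁‖ = 1 := finsler_norm_one v hv
          have h3 : ¬ (f v₁ * g u₁ - f u₁ * g v₁ ≤ 0) := by
            intro h3
            exact hmem ⟨hnorm₁, hgv₁.le, h3⟩
          push_neg at h3
          have hlt : φ v₁ < φ u₁ :=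
            finsler_ratio_lt_pospos hgv₁ hgu₁ (by nlinarith)
          exact le_trans hlt.le (humax hu₁KP)
      have claimB : ∀ v : Fin d → ℝ, v ≠ 0 → g v < 0 → φ wS ≤ φ v := by
        intro v hv hgv
        set v₁ := ‖v‖⁻¹ • v with hv₁def
        have hfn : f v = ‖v‖ ^ 2 * f v₁ := finsler_normalize A v hv
        have hgn : g v = ‖v‖ ^ 2 * g v₁ := finsler_normalize B v hv
        have hn2 : 0 < ‖v‖ ^ 2 := pow_pos (norm_pos_iff.2 hv) 2
        have hgv₁ : g v₁ < 0 := by nlinarith [hgv, hgn]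
        have hratio : φ v = φ v₁ := by
          show -f v / g v = -f v₁ / g v₁
          rw [hfn, hgn, show -(‖v‖ ^ 2 * f v₁) = ‖v‖ ^ 2 * (-f v₁) by ring,
            mul_div_mul_left _ _ (ne_of_gt hn2)]
        rw [hratio]
        by_cases hmem : v₁ ∈ KN
        · exact hwmin hmem
        · have hnorm₁ : ‖v₁‖ = 1 := finsler_norm_one v hv
          have h3 : ¬ (0 ≤ f v₁ * g w₁ - f w₁ * g v₁) := by
            intro h3
            exact hmem ⟨hnorm₁, hgv₁.le, h3⟩
          push_neg at h3
          have hlt : φ w₁ < φ v₁ :=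
            finsler_ratio_lt_negneg hgw₁ hgv₁ (by nlinarith)
          exact le_trans (hwmin hw₁KN) hlt.le
      have hkey := finsler_key A B H hguS hgwS
      have hφlt : φ uS < φ wS := finsler_ratio_lt hguS hgwS hkey
      refine ⟨(φ uS + φ wS) / 2, ?_⟩
      intro v hv
      rcases lt_trichotomy (g v) 0 with hgv | hgv | hgv
      · have h1 : φ wS ≤ φ v := claimB v hv hgv
        have h2 : (φ uS + φ wS) / 2 < -f v / g v := by
          have : (φ uS + φ wS) / 2 < φ v := by linarith
          exact this
        rw [lt_div_iff_of_neg hgv] at h2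
        show 0 < f v + (φ uS + φ wS) / 2 * g v
        linarith
      · have := H v hv hgv
        show 0 < f v + (φ uS + φ wS) / 2 * g v
        rw [hgv]
        simpa using this
      · have h1 : φ v ≤ φ uS := claimA v hv hgv
        have h2 : -f v / g v < (φ uS + φ wS) / 2 := by
          have : φ v < (φ uS + φ wS) / 2 := by linarith
          exact this
        rw [div_lt_iff₀ hgv] at h2
        show 0 < f v + (φ uS + φ wS) / 2 * g v
        linarith
    · push_neg at hN
      exact finsler_oneSigned A B H hN
  · push_neg at hP
    have H' : ∀ v : Fin d → ℝ, v ≠ 0 → (-B).mulVec v ⬝ᵥ v = 0 → 0 < A.mulVec v ⬝ᵥ v := by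
      intro v hv h0
      apply H v hv
      rw [neg_mulVec, neg_dotProduct] at h0
      linarith
    have hg' : ∀ v : Fin d → ℝ, 0 ≤ (-B).mulVec v ⬝ᵥ v := by
      intro v
      rw [neg_mulVec, neg_dotProduct]
      linarith [hP v]
    obtain ⟨x, hx⟩ := finsler_oneSigned A (-B) H' hg'
    refine ⟨-x, ?_⟩
    intro v hv
    have := hx v hv
    rw [neg_mulVec, neg_dotProduct] at this
    linarith

/-- **Finsler's lemma, strict version.** For real symmetric `d × d` matrices `A`, `B`:
`⟨Av, v⟩ > 0` for all nonzero `v` with `⟨Bv, v⟩ = 0` iff there is `x ∈ ℝ` such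
that `A + x B` is positive definite. -/
theorem finsler_lemma_strict (d : ℕ) (A B : Matrix (Fin d) (Fin d) ℝ)
    (hA : A.IsSymm) (hB : B.IsSymm) :
    (∀ v : Fin d → ℝ, v ≠ 0 → B.mulVec v ⬝ᵥ v = 0 → 0 < A.mulVec v ⬝ᵥ v) ↔
      ∃ x : ℝ, (A + x • B).PosDef := by
  constructor
  · intro H
    obtain ⟨x, hx⟩ := finsler_exists A B H
    refine ⟨x, posDef_iff_dotProduct_mulVec.mpr ⟨?_, ?_⟩⟩
    · rw [Matrix.IsHermitian, conjTranspose_eq_transpose_of_trivial, transpose_add,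
        transpose_smul, hA.eq, hB.eq]
    · intro v hv
      have := hx v hv
      simpa [add_mulVec, smul_mulVec, dotProduct_add, dotProduct_smul,
        dotProduct_comm v, smul_eq_mul] using this
  · rintro ⟨x, hxpd⟩ v hv hBv
    obtain ⟨hherm, hpos⟩ := posDef_iff_dotProduct_mulVec.mp hxpd
    have h := hpos (x := v) hv
    simp only [star_trivial, add_mulVec, smul_mulVec, dotProduct_add, dotProduct_smul,
      smul_eq_mul] at h
    rw [dotProduct_comm v (A.mulVec v), dotProduct_comm v (B.mulVec v), hBv] at h
    linarith
end

section
/- Every spectrahedron S ⊂ ℝ^n with nonempty interior is an algebraic interior; moreover, if d is minimal among semidefinite representations S = {x : A + Σ xᵢBᵢ ⪰ 0} with A, Bᵢ ∈ Sym²(ℝ^d), then A + Σ xᵢBᵢ is positive definite for every x in the interior of S. -/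
open Matrix

/-- `S ⊆ ℝⁿ` is an algebraic interior with defining polynomial `p` if it is the
closure of a connected component of `{x : p x > 0}`. -/
def IsDefiningPoly {n : ℕ} (S : Set (Fin n → ℝ)) (p : MvPolynomial (Fin n) ℝ) : Prop :=
  ∃ x₀ : Fin n → ℝ, 0 < MvPolynomial.eval x₀ p ∧
    S = closure (connectedComponentIn {x : Fin n → ℝ | 0 < MvPolynomial.eval x p} x₀)

def IsAlgebraicInterior {n : ℕ} (S : Set (Fin n → ℝ)) : Prop :=
  ∃ p : MvPolynomial (Fin n) ℝ, IsDefiningPoly S p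

section SpectraAux

variable {n d : ℕ} (A : Matrix (Fin d) (Fin d) ℝ) (B : Fin n → Matrix (Fin d) (Fin d) ℝ)

lemma pen_entry (x : Fin n → ℝ) (j l : Fin d) :
    (A + ∑ i, x i • B i) j l = A j l + ∑ i, x i * B i j l := by
  simp [Matrix.sum_apply]

lemma pen_isHermitian (hA : A.IsSymm) (hB : ∀ i, (B i).IsSymm) (x : Fin n → ℝ) :
    (A + ∑ i, x i • B i).IsHermitian := by
  rw [Matrix.IsHermitian, conjTranspose_eq_transpose_of_trivial, transpose_add,
    Matrix.transpose_sum]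
  simp only [transpose_smul]
  rw [hA.eq]
  congr 1
  exact Finset.sum_congr rfl fun i _ => by rw [(hB i).eq]

lemma pen_mulVec (x : Fin n → ℝ) (v : Fin d → ℝ) :
    (A + ∑ i, x i • B i) *ᵥ v = A *ᵥ v + ∑ i, x i • (B i *ᵥ v) := by
  rw [add_mulVec]
  congr 1
  induction (Finset.univ : Finset (Fin n)) using Finset.induction with
  | empty => simp
  | insert _ _ h ih => rw [Finset.sum_insert h, Finset.sum_insert h, add_mulVec, ih,
      smul_mulVec]

lemma pen_quad (x : Fin n → ℝ) (v : Fin d → ℝ) :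
    v ⬝ᵥ ((A + ∑ i, x i • B i) *ᵥ v) =
      v ⬝ᵥ (A *ᵥ v) + ∑ i, x i * (v ⬝ᵥ (B i *ᵥ v)) := by
  rw [pen_mulVec, dotProduct_add]
  congr 1
  induction (Finset.univ : Finset (Fin n)) using Finset.induction with
  | empty => simp
  | insert _ _ h ih => rw [Finset.sum_insert h, Finset.sum_insert h, dotProduct_add, ih,
      dotProduct_smul, smul_eq_mul]

lemma cont_quad (v : Fin d → ℝ) :
    Continuous fun x : Fin n → ℝ => v ⬝ᵥ ((A + ∑ i, x i • B i) *ᵥ v) := by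
  simp only [pen_quad]
  exact continuous_const.add <| continuous_finset_sum _ fun i _ =>
    (continuous_apply i).mul continuous_const

lemma closed_pen_psd (hA : A.IsSymm) (hB : ∀ i, (B i).IsSymm) :
    IsClosed {x : Fin n → ℝ | (A + ∑ i, x i • B i).PosSemidef} := by
  have : {x : Fin n → ℝ | (A + ∑ i, x i • B i).PosSemidef} =
      ⋂ v : Fin d → ℝ, {x | 0 ≤ v ⬝ᵥ ((A + ∑ i, x i • B i) *ᵥ v)} := by
    ext x
    simp only [Set.mem_setOf_eq, Set.mem_iInter]
    constructor
    · intro h v; simpa using h.dotProduct_mulVec_nonneg v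
    · intro h; exact Matrix.PosSemidef.of_dotProduct_mulVec_nonneg (pen_isHermitian A B hA hB x) fun v => by simpa using h v
  rw [this]
  exact isClosed_iInter fun v => isClosed_le continuous_const (cont_quad A B v)

lemma convex_pen_psd (hA : A.IsSymm) (hB : ∀ i, (B i).IsSymm) :
    Convex ℝ {x : Fin n → ℝ | (A + ∑ i, x i • B i).PosSemidef} := by
  intro x hx y hy a b ha hb hab
  refine Matrix.PosSemidef.of_dotProduct_mulVec_nonneg (pen_isHermitian A B hA hB _) fun u => ?_
  have key : u ⬝ᵥ ((A + ∑ i, (a • x + b • y) i • B i) *ᵥ u) =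
      a * (u ⬝ᵥ ((A + ∑ i, x i • B i) *ᵥ u)) + b * (u ⬝ᵥ ((A + ∑ i, y i • B i) *ᵥ u)) := by
    simp only [pen_quad, Pi.add_apply, Pi.smul_apply, smul_eq_mul]
    rw [mul_add, mul_add, Finset.mul_sum, Finset.mul_sum, add_add_add_comm,
      ← Finset.sum_add_distrib, ← add_mul, hab, one_mul]
    congr 1
    exact Finset.sum_congr rfl fun i _ => by ring
  have h0 : (0:ℝ) ≤ a * (u ⬝ᵥ ((A + ∑ i, x i • B i) *ᵥ u)) +
      b * (u ⬝ᵥ ((A + ∑ i, y i • B i) *ᵥ u)) := by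
    have h1 := Matrix.PosSemidef.dotProduct_mulVec_nonneg hx u
    have h2 := Matrix.PosSemidef.dotProduct_mulVec_nonneg hy u
    simp only [star_trivial] at h1 h2
    positivity
  rw [star_trivial, key]
  exact h0

lemma cont_quadv (N : Matrix (Fin d) (Fin d) ℝ) :
    Continuous fun v : Fin d → ℝ => v ⬝ᵥ (N *ᵥ v) := by
  simp only [dotProduct, Matrix.mulVec]
  exact continuous_finset_sum _ fun p _ => (continuous_apply p).mul
    (continuous_finset_sum _ fun q _ => continuous_const.mul (continuous_apply q))

lemma quad_smul (N : Matrix (Fin d) (Fin d) ℝ) (c : ℝ) (u : Fin d → ℝ) :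
    (c • u) ⬝ᵥ (N *ᵥ (c • u)) = c^2 * (u ⬝ᵥ (N *ᵥ u)) := by
  rw [mulVec_smul, smul_dotProduct, dotProduct_smul, smul_eq_mul, smul_eq_mul]
  ring

lemma abs_quad_le (N : Matrix (Fin d) (Fin d) ℝ) (v : Fin d → ℝ) (hv : ‖v‖ = 1) :
    |v ⬝ᵥ (N *ᵥ v)| ≤ ∑ p, ∑ q, |N p q| := by
  have hvb : ∀ p, |v p| ≤ 1 := fun p => by
    have := norm_le_pi_norm v p
    rwa [Real.norm_eq_abs, hv] at this
  have key : |∑ p, v p * ∑ q, N p q * v q| ≤ ∑ p, ∑ q, |N p q| := by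
    refine (Finset.abs_sum_le_sum_abs _ _).trans (Finset.sum_le_sum fun p _ => ?_)
    rw [abs_mul]
    have h2 : |∑ q, N p q * v q| ≤ ∑ q, |N p q| := by
      refine (Finset.abs_sum_le_sum_abs _ _).trans (Finset.sum_le_sum fun q _ => ?_)
      rw [abs_mul]
      exact mul_le_of_le_one_right (abs_nonneg _) (hvb q)
    calc |v p| * |∑ q, N p q * v q| ≤ 1 * (∑ q, |N p q|) :=
          mul_le_mul (hvb p) h2 (abs_nonneg _) zero_le_one
      _ = ∑ q, |N p q| := one_mul _
  simpa [dotProduct, Matrix.mulVec] using key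

lemma isOpen_pen_posDef (hA : A.IsSymm) (hB : ∀ i, (B i).IsSymm) :
    IsOpen {x : Fin n → ℝ | (A + ∑ i, x i • B i).PosDef} := by
  by_cases hd : d = 0
  · subst hd
    have : {x : Fin n → ℝ | (A + ∑ i, x i • B i).PosDef} = Set.univ := by
      refine Set.eq_univ_of_forall fun x => ?_
      refine ⟨pen_isHermitian A B hA hB x, fun u hu => absurd (Subsingleton.elim u 0) hu⟩
    rw [this]; exact isOpen_univ
  · have : Nontrivial (Fin d → ℝ) := by
      refine ⟨0, Function.const _ 1, fun h => ?_⟩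
      have := congrFun h ⟨0, Nat.pos_of_ne_zero hd⟩
      simp [Function.const] at this
    rw [Metric.isOpen_iff]
    intro x hx
    set K := Metric.sphere (0 : Fin d → ℝ) 1 with hK
    have hKc : IsCompact K := isCompact_sphere 0 1
    have hKne : K.Nonempty := NormedSpace.sphere_nonempty.mpr zero_le_one
    obtain ⟨v₀, hv₀K, hmin⟩ := hKc.exists_isMinOn hKne
      (cont_quadv (A + ∑ i, x i • B i)).continuousOn
    have hv₀ : v₀ ≠ 0 := by
      intro h
      rw [hK, mem_sphere_zero_iff_norm, h] at hv₀K
      simp at hv₀K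
    set ε := v₀ ⬝ᵥ ((A + ∑ i, x i • B i) *ᵥ v₀) with hε
    have hεpos : 0 < ε := by simpa using Matrix.PosDef.dotProduct_mulVec_pos hx hv₀
    set c : ℝ := ∑ i, ∑ p, ∑ q, |B i p q| with hc
    have hc0 : 0 ≤ c := Finset.sum_nonneg fun i _ => Finset.sum_nonneg fun p _ =>
      Finset.sum_nonneg fun q _ => abs_nonneg _
    refine ⟨ε / (c + 1), by positivity, fun y hy => ?_⟩
    have hdist : dist y x < ε / (c + 1) := hy
    have claim : ∀ v ∈ K, 0 < v ⬝ᵥ ((A + ∑ i, y i • B i) *ᵥ v) := by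
      intro v hvK
      have hv1 : ‖v‖ = 1 := by rwa [hK, mem_sphere_zero_iff_norm] at hvK
      have hsplit : v ⬝ᵥ ((A + ∑ i, y i • B i) *ᵥ v) =
          v ⬝ᵥ ((A + ∑ i, x i • B i) *ᵥ v) + ∑ i, (y i - x i) * (v ⬝ᵥ (B i *ᵥ v)) := by
        rw [pen_quad, pen_quad, add_assoc, ← Finset.sum_add_distrib]
        congr 1
        exact Finset.sum_congr rfl fun i _ => by ring
      have habs : |∑ i, (y i - x i) * (v ⬝ᵥ (B i *ᵥ v))| ≤ dist y x * c := by
        refine (Finset.abs_sum_le_sum_abs _ _).trans ?_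
        rw [hc, Finset.mul_sum]
        refine Finset.sum_le_sum fun i _ => ?_
        rw [abs_mul]
        refine mul_le_mul ?_ (abs_quad_le (B i) v hv1) (abs_nonneg _) dist_nonneg
        have := dist_le_pi_dist y x i
        rwa [Real.dist_eq] at this
      have hεv : ε ≤ v ⬝ᵥ ((A + ∑ i, x i • B i) *ᵥ v) := hmin hvK
      have hlt : dist y x * c < ε := by
        calc dist y x * c ≤ dist y x * (c + 1) := by
              have := dist_nonneg (x := y) (y := x); nlinarith
          _ < (ε / (c + 1)) * (c + 1) := by
              have hpos : (0:ℝ) < c + 1 := by linarith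
              exact mul_lt_mul_of_pos_right hdist hpos
          _ = ε := by field_simp
      have := neg_abs_le (∑ i, (y i - x i) * (v ⬝ᵥ (B i *ᵥ v)))
      rw [hsplit]
      linarith
    refine Matrix.PosDef.of_dotProduct_mulVec_pos (pen_isHermitian A B hA hB y) fun u hu => ?_
    have hnu : ‖u‖ ≠ 0 := norm_ne_zero_iff.mpr hu
    have hwK : (‖u‖⁻¹ • u) ∈ K := by
      rw [hK, mem_sphere_zero_iff_norm, norm_smul, Real.norm_eq_abs, abs_inv, abs_norm,
        inv_mul_cancel₀ hnu]
    have h2 := claim _ hwK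
    rw [quad_smul] at h2
    have hsq : (0:ℝ) < (‖u‖⁻¹)^2 := by positivity
    simp only [star_trivial]
    nlinarith [h2, hsq]

end SpectraAux

section Red

lemma posDef_of_posSemidef_det_ne_zero {d : ℕ} {M : Matrix (Fin d) (Fin d) ℝ}
    (h : M.PosSemidef) (hdet : M.det ≠ 0) : M.PosDef := by
  refine Matrix.PosDef.of_dotProduct_mulVec_pos h.1 fun u hu => ?_
  rcases lt_or_eq_of_le (h.dotProduct_mulVec_nonneg u) with hlt | heq
  · exact hlt
  · exfalso
    apply hdet
    rw [← Matrix.exists_mulVec_eq_zero_iff]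
    refine ⟨u, hu, ?_⟩
    have := (h.dotProduct_mulVec_zero_iff u).mp (by simpa using heq.symm)
    simpa using this

lemma posSemidef_kernel_of_not_posDef {d : ℕ} {M : Matrix (Fin d) (Fin d) ℝ}
    (h : M.PosSemidef) (hnd : ¬ M.PosDef) : ∃ v, v ≠ 0 ∧ M *ᵥ v = 0 := by
  rw [Matrix.posDef_iff_dotProduct_mulVec, not_and] at hnd
  push_neg at hnd
  obtain ⟨v, hv, hle⟩ := hnd h.1
  refine ⟨v, hv, (h.dotProduct_mulVec_zero_iff v).mp
    (le_antisymm (by simpa using hle) (h.dotProduct_mulVec_nonneg v))⟩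

lemma red1 {m : ℕ} (N : Matrix (Fin (m+1)) (Fin (m+1)) ℝ) (hN : Nᵀ = N)
    {v : Fin (m+1) → ℝ} (hNv : N *ᵥ v = 0) (t : ℝ) (u : Fin (m+1) → ℝ) :
    u ⬝ᵥ (N *ᵥ u) = (u - t • v) ⬝ᵥ (N *ᵥ (u - t • v)) := by
  have hvN : v ⬝ᵥ (N *ᵥ u) = 0 := by
    rw [Matrix.dotProduct_mulVec, ← Matrix.mulVec_transpose, hN, hNv, zero_dotProduct]
  rw [mulVec_sub, mulVec_smul, hNv, smul_zero, sub_zero, sub_dotProduct, smul_dotProduct,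
    hvN, smul_eq_mul, mul_zero, sub_zero]

lemma red2 {m : ℕ} (N : Matrix (Fin (m+1)) (Fin (m+1)) ℝ) (k : Fin (m+1))
    (u' : Fin (m+1) → ℝ) (h0 : u' k = 0) :
    u' ⬝ᵥ (N *ᵥ u') =
      (fun j => u' (k.succAbove j)) ⬝ᵥ
        ((N.submatrix k.succAbove k.succAbove) *ᵥ (fun j => u' (k.succAbove j))) := by
  show ∑ p, u' p * ∑ q, N p q * u' q = _
  rw [Fin.sum_univ_succAbove (fun p => u' p * ∑ q, N p q * u' q) k, h0, zero_mul, zero_add]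
  refine Finset.sum_congr rfl fun j _ => ?_
  congr 1
  rw [Fin.sum_univ_succAbove (fun q => N (k.succAbove j) q * u' q) k, h0, mul_zero, zero_add]
  rfl

end Red

/-- Every spectrahedron with nonempty interior is an algebraic interior; moreover, if the
size `d` of the semidefinite representation is minimal, then the pencil is positive
definite on the interior of `S`. -/
theorem spectrahedron_isAlgebraicInterior (n d : ℕ)
    (A : Matrix (Fin d) (Fin d) ℝ) (B : Fin n → Matrix (Fin d) (Fin d) ℝ)
    (hA : A.IsSymm) (hB : ∀ i, (B i).IsSymm)
    (S : Set (Fin n → ℝ))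
    (hS : S = {x | (A + ∑ i, x i • B i).PosSemidef})
    (hne : (interior S).Nonempty)
    (hmin : ∀ (d' : ℕ) (A' : Matrix (Fin d') (Fin d') ℝ)
      (B' : Fin n → Matrix (Fin d') (Fin d') ℝ), A'.IsSymm → (∀ i, (B' i).IsSymm) →
      S = {x | (A' + ∑ i, x i • B' i).PosSemidef} → d ≤ d') :
    IsAlgebraicInterior S ∧ ∀ x ∈ interior S, (A + ∑ i, x i • B i).PosDef := by
  classical
  have hpsdS : ∀ x ∈ S, (A + ∑ i, x i • B i).PosSemidef := fun x hx => by
    rw [hS] at hx; exact hx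
  -- Part 2: positive definiteness on the interior
  have key : ∀ x ∈ interior S, (A + ∑ i, x i • B i).PosDef := by
    intro xs hxs
    have hpsd : (A + ∑ i, xs i • B i).PosSemidef := hpsdS xs (interior_subset hxs)
    by_contra hnd
    obtain ⟨v, hv, hMv⟩ := posSemidef_kernel_of_not_posDef hpsd hnd
    obtain ⟨ε, hε, hball⟩ := Metric.mem_nhds_iff.mp (mem_interior_iff_mem_nhds.mp hxs)
    -- the quadratic form of v vanishes on the ball
    have hquad0 : ∀ y ∈ Metric.ball xs ε, v ⬝ᵥ ((A + ∑ i, y i • B i) *ᵥ v) = 0 := by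
      intro y hy
      set y' : Fin n → ℝ := xs + (xs - y) with hy'
      have hy'ball : y' ∈ Metric.ball xs ε := by
        rw [Metric.mem_ball] at hy ⊢
        have hdd : dist y' xs = dist y xs := by
          rw [dist_eq_norm, hy', add_sub_cancel_left, ← neg_sub, norm_neg, ← dist_eq_norm]
        rwa [hdd]
      have h1 : 0 ≤ v ⬝ᵥ ((A + ∑ i, y i • B i) *ᵥ v) := by
        simpa using (hpsdS y (hball hy)).dotProduct_mulVec_nonneg v
      have h2 : 0 ≤ v ⬝ᵥ ((A + ∑ i, y' i • B i) *ᵥ v) := by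
        simpa using (hpsdS y' (hball hy'ball)).dotProduct_mulVec_nonneg v
      have hq0 : v ⬝ᵥ ((A + ∑ i, xs i • B i) *ᵥ v) = 0 := by
        rw [hMv, dotProduct_zero]
      have hsum : v ⬝ᵥ ((A + ∑ i, y i • B i) *ᵥ v) + v ⬝ᵥ ((A + ∑ i, y' i • B i) *ᵥ v) =
          2 * (v ⬝ᵥ ((A + ∑ i, xs i • B i) *ᵥ v)) := by
        simp only [pen_quad, hy', Pi.add_apply, Pi.sub_apply]
        rw [add_add_add_comm, ← Finset.sum_add_distrib, mul_add, Finset.mul_sum]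
        congr 1
        · ring
        · exact Finset.sum_congr rfl fun i _ => by ring
      rw [hq0, mul_zero] at hsum
      linarith
    have hker : ∀ y ∈ Metric.ball xs ε, (A + ∑ i, y i • B i) *ᵥ v = 0 := fun y hy =>
      ((hpsdS y (hball hy)).dotProduct_mulVec_zero_iff v).mp (by simpa using hquad0 y hy)
    have hFy : ∀ y ∈ Metric.ball xs ε, ∑ j, y j • (B j *ᵥ v) = -(A *ᵥ v) := by
      intro y hy
      have := hker y hy
      rw [pen_mulVec] at this
      exact eq_neg_of_add_eq_zero_right this
    have hxsball : xs ∈ Metric.ball xs ε := Metric.mem_ball_self hε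
    have hBv : ∀ i, B i *ᵥ v = 0 := by
      intro i
      set y : Fin n → ℝ := xs + (ε/2) • (Pi.single i 1 : Fin n → ℝ) with hy
      have hyball : y ∈ Metric.ball xs ε := by
        rw [Metric.mem_ball]
        rw [dist_pi_lt_iff hε]
        intro j
        rw [hy, Pi.add_apply, Real.dist_eq, add_sub_cancel_left, Pi.smul_apply, smul_eq_mul]
        rcases eq_or_ne j i with rfl | hk
        · rw [Pi.single_eq_same, mul_one, abs_of_pos (by linarith)]; linarith
        · rw [Pi.single_eq_of_ne hk, mul_zero, abs_zero]; exact hε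
      have h1 := hFy xs hxsball
      have h2 := hFy y hyball
      have hsplit : ∑ j, y j • (B j *ᵥ v) =
          ∑ j, xs j • (B j *ᵥ v) + ∑ j, ((ε/2) * (Pi.single i 1 : Fin n → ℝ) j) • (B j *ᵥ v) := by
        rw [← Finset.sum_add_distrib]
        refine Finset.sum_congr rfl fun j _ => ?_
        rw [hy, Pi.add_apply, add_smul, Pi.smul_apply, smul_eq_mul]
      rw [hsplit, h1] at h2
      have hz : ∑ j, ((ε/2) * (Pi.single i 1 : Fin n → ℝ) j) • (B j *ᵥ v) = 0 :=
        add_eq_left.mp h2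
      have hsingle : ∑ j, ((ε/2) * (Pi.single i 1 : Fin n → ℝ) j) • (B j *ᵥ v) = (ε/2) • (B i *ᵥ v) := by
        rw [Finset.sum_eq_single i]
        · rw [Pi.single_eq_same, mul_one]
        · intro j _ hj
          rw [Pi.single_eq_of_ne hj, mul_zero, zero_smul]
        · intro h; exact absurd (Finset.mem_univ i) h
      rw [hsingle] at hz
      rcases smul_eq_zero.mp hz with h | h
      · exact absurd h (by positivity)
      · exact h
    have hAv : A *ᵥ v = 0 := by
      have := hFy xs hxsball
      simp only [hBv, smul_zero, Finset.sum_const_zero] at this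
      rw [← neg_eq_zero, ← this]
    -- dimension reduction
    obtain ⟨k, hk⟩ : ∃ k, v k ≠ 0 := Function.ne_iff.mp hv
    obtain ⟨m, rfl⟩ : ∃ m, d = m + 1 :=
      ⟨d - 1, (Nat.succ_pred_eq_of_pos (Nat.pos_of_ne_zero fun h => by
        subst h; exact absurd (Subsingleton.elim v 0) hv)).symm⟩
    set e := k.succAbove with he
    set A' := A.submatrix e e with hA'def
    set B' : Fin n → Matrix (Fin m) (Fin m) ℝ := fun i => (B i).submatrix e e with hB'def
    have hA' : A'.IsSymm := by rw [hA'def, Matrix.IsSymm, transpose_submatrix, hA.eq]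
    have hB' : ∀ i, (B' i).IsSymm := fun i => by
      rw [hB'def, Matrix.IsSymm, transpose_submatrix, (hB i).eq]
    have hS' : S = {x | (A' + ∑ i, x i • B' i).PosSemidef} := by
      rw [hS]
      ext x
      simp only [Set.mem_setOf_eq]
      have hsub : A' + ∑ i, x i • B' i = (A + ∑ i, x i • B i).submatrix e e := by
        ext j l
        simp [hA'def, hB'def, Matrix.sum_apply, Matrix.submatrix_apply]
      rw [hsub]
      constructor
      · exact fun h => h.submatrix e
      · intro h
        refine Matrix.PosSemidef.of_dotProduct_mulVec_nonneg (pen_isHermitian A B hA hB x) fun u => ?_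
        rw [star_trivial]
        have hNv : (A + ∑ i, x i • B i) *ᵥ v = 0 := by
          rw [pen_mulVec]
          simp [hAv, hBv]
        have hN : (A + ∑ i, x i • B i)ᵀ = (A + ∑ i, x i • B i) := by
          rw [← conjTranspose_eq_transpose_of_trivial]
          exact pen_isHermitian A B hA hB x
        set u' : Fin (m+1) → ℝ := u - (u k / v k) • v with hu'
        have h0 : u' k = 0 := by
          rw [hu', Pi.sub_apply, Pi.smul_apply, smul_eq_mul, div_mul_cancel₀ _ hk, sub_self]
        rw [red1 _ hN hNv (u k / v k) u, red2 _ k u' h0]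
        have := h.dotProduct_mulVec_nonneg (fun j => u' (e j))
        simpa using this
    have := hmin m A' B' hA' hB' hS'
    omega
  -- Part 1: algebraic interior
  obtain ⟨x₀, hx₀⟩ := hne
  have hScl : IsClosed S := hS ▸ closed_pen_psd A B hA hB
  have hScv : Convex ℝ S := hS ▸ convex_pen_psd A B hA hB
  set p : MvPolynomial (Fin n) ℝ :=
    (Matrix.of fun j l : Fin d => MvPolynomial.C (A j l) +
      ∑ i, (MvPolynomial.X i : MvPolynomial (Fin n) ℝ) * MvPolynomial.C (B i j l)).det
    with hp
  have evalp : ∀ x, MvPolynomial.eval x p = (A + ∑ i, x i • B i).det := by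
    intro x
    rw [hp, RingHom.map_det]
    congr 1
    ext j l
    simp [Matrix.map_apply, pen_entry, Matrix.sum_apply]
  set P : Set (Fin n → ℝ) := {x | 0 < MvPolynomial.eval x p} with hP
  have hsub1 : interior S ⊆ P := fun x hx => by
    rw [hP, Set.mem_setOf_eq, evalp]
    exact (key x hx).det_pos
  set T := connectedComponentIn P x₀ with hT
  have hx₀P : x₀ ∈ P := hsub1 hx₀
  have hsub2 : interior S ⊆ T :=
    (hScv.interior).isPreconnected.subset_connectedComponentIn hx₀ hsub1
  have hTS : T ⊆ S := by
    have hpre : IsPreconnected T := isPreconnected_connectedComponentIn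
    set U : Set (Fin n → ℝ) := {x | (A + ∑ i, x i • B i).PosDef} with hU
    have hUS : U ⊆ S := fun z hz => by rw [hS]; exact hz.posSemidef
    have hUV : T ⊆ U ∪ Sᶜ := by
      intro z hz
      by_cases hzS : z ∈ S
      · left
        refine posDef_of_posSemidef_det_ne_zero (hpsdS z hzS) ?_
        have : 0 < MvPolynomial.eval z p := connectedComponentIn_subset P x₀ hz
        rw [evalp] at this
        exact this.ne'
      · right; exact hzS
    have hTU : (T ∩ U).Nonempty :=
      ⟨x₀, mem_connectedComponentIn hx₀P, key x₀ hx₀⟩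
    have hTV : ¬(T ∩ Sᶜ).Nonempty := by
      intro hV
      obtain ⟨z, _, hzU, hzV⟩ := hpre U Sᶜ (isOpen_pen_posDef A B hA hB)
        hScl.isOpen_compl hUV hTU hV
      exact hzV (hUS hzU)
    intro z hz
    by_contra hzS
    exact hTV ⟨z, hz, hzS⟩
  have hclosure : S = closure T := by
    apply Set.Subset.antisymm
    · -- S ⊆ closure (interior S) ⊆ closure T
      refine Set.Subset.trans ?_ (closure_mono hsub2)
      intro x hx
      rw [Metric.mem_closure_iff]
      intro δ hδ
      set t : ℝ := min 1 (δ / (‖x₀ - x‖ + 1)) with ht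
      have hnn : (0:ℝ) ≤ ‖x₀ - x‖ := norm_nonneg _
      have htpos : 0 < t := lt_min one_pos (by positivity)
      have ht1 : t ≤ 1 := min_le_left _ _
      refine ⟨t • x₀ + (1 - t) • x,
        hScv.combo_interior_self_mem_interior hx₀ hx htpos (by linarith) (by ring), ?_⟩
      have hxz : x - (t • x₀ + (1 - t) • x) = t • (x - x₀) := by
        ext j
        simp only [Pi.sub_apply, Pi.add_apply, Pi.smul_apply, smul_eq_mul]
        ring
      rw [dist_eq_norm, hxz, norm_smul, Real.norm_eq_abs, abs_of_pos htpos, ← neg_sub,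
        norm_neg]
      have h2 : t ≤ δ / (‖x₀ - x‖ + 1) := min_le_right _ _
      calc t * ‖x₀ - x‖ ≤ (δ / (‖x₀ - x‖ + 1)) * ‖x₀ - x‖ :=
            mul_le_mul_of_nonneg_right h2 hnn
        _ < (δ / (‖x₀ - x‖ + 1)) * (‖x₀ - x‖ + 1) := by
            have : (0:ℝ) < δ / (‖x₀ - x‖ + 1) := by positivity
            nlinarith
        _ = δ := by field_simp
    · rw [← hScl.closure_eq]
      exact closure_mono hTS
  refine ⟨⟨p, x₀, ?_, ?_⟩, key⟩
  · rw [evalp]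
    exact (key x₀ hx₀).det_pos
  · exact hclosure
end

section
/- Let R ∈ Sym²(ℝ⁶) and * = diag(Id₃, −Id₃). If there exists x ∈ ℝ with R + x* positive semidefinite, then the polynomial t ↦ det(R + t*) has only real roots (counted with multiplicity, over ℂ). -/
set_option maxRecDepth 8000

open Matrix Polynomial
open scoped ComplexOrder
open scoped MatrixOrder

/-- The Hodge star on `ℝ⁶` in the self-dual/anti-self-dual splitting. -/
noncomputable def starSD : Matrix (Fin 6) (Fin 6) ℝ := diagonal ![1, 1, 1, -1, -1, -1]

/-- If `R ∈ Sym²(ℝ⁶)` and `R + x *` is positive semidefinite for some `x ∈ ℝ`, then the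
polynomial `t ↦ det(R + t *)` has only real roots (over `ℂ`). -/
theorem detPencil_real_rooted (R : Matrix (Fin 6) (Fin 6) ℝ) (hsymm : R.IsSymm)
    (hx : ∃ x : ℝ, (R + x • starSD).PosSemidef) :
    ∀ z ∈ (((R.map Polynomial.C +
        (Polynomial.X : Polynomial ℝ) • starSD.map Polynomial.C).det).map
          (algebraMap ℝ ℂ)).roots, z.im = 0 := by
  obtain ⟨x, hM⟩ := hx
  intro z hz
  set f : ℝ →+* ℂ := algebraMap ℝ ℂ with hf
  have hp := (Polynomial.mem_roots'.mp hz).2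
  rw [Polynomial.IsRoot, Polynomial.eval_map] at hp
  set Dc : Matrix (Fin 6) (Fin 6) ℂ := starSD.map f with hDc
  set Rc : Matrix (Fin 6) (Fin 6) ℂ := R.map f with hRc
  -- the determinant of the complex pencil at z vanishes
  have hdet : (Rc + z • Dc).det = 0 := by
    have hmap : ((R.map Polynomial.C +
        (Polynomial.X : Polynomial ℝ) • starSD.map Polynomial.C).map
          (Polynomial.eval₂RingHom f z)) = Rc + z • Dc := by
      ext i j
      simp only [Matrix.map_apply, Matrix.add_apply, Matrix.smul_apply, smul_eq_mul,
        Polynomial.coe_eval₂RingHom, Polynomial.eval₂_add, Polynomial.eval₂_mul,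
        Polynomial.eval₂_C, Polynomial.eval₂_X, hRc, hDc]
    have := RingHom.map_det (Polynomial.eval₂RingHom f z)
      (R.map Polynomial.C + (Polynomial.X : Polynomial ℝ) • starSD.map Polynomial.C)
    rw [RingHom.mapMatrix_apply, hmap] at this
    rw [← this]
    simpa using hp
  -- shift by x
  set s : ℂ := z - (x : ℂ) with hs
  set M : Matrix (Fin 6) (Fin 6) ℝ := R + x • starSD with hMdef
  set Mc : Matrix (Fin 6) (Fin 6) ℂ := M.map f with hMc
  have hshift : Rc + z • Dc = Mc + s • Dc := by
    ext i j
    simp only [hMc, hMdef, hRc, hDc, Matrix.map_apply, Matrix.add_apply, Matrix.smul_apply,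
      smul_eq_mul, map_add, RingHom.map_mul, hs, hf, Complex.coe_algebraMap]
    push_cast
    ring
  rw [hshift] at hdet
  obtain ⟨v, hv0, hveq⟩ := (Matrix.exists_mulVec_eq_zero_iff).mpr hdet
  -- square root of M
  set A : Matrix (Fin 6) (Fin 6) ℝ := CFC.sqrt M with hA
  set Ac : Matrix (Fin 6) (Fin 6) ℂ := A.map f with hAc
  have hAA : Ac * Ac = Mc := by
    rw [hAc, hMc, ← Matrix.map_mul, CFC.sqrt_mul_sqrt_self M hM.nonneg]
  have hAherm : Ac.conjTranspose = Ac := by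
    have hAsymm : A.conjTranspose = A := (CFC.sqrt_nonneg M).posSemidef.1
    ext i j
    have : A j i = A i j := by
      have := congrFun (congrFun hAsymm i) j
      simpa [Matrix.conjTranspose_apply] using this
    simp [hAc, Matrix.conjTranspose_apply, Matrix.map_apply, this, hf,
      Complex.coe_algebraMap, Complex.conj_ofReal]
  have hDherm : Dc.conjTranspose = Dc := by
    ext i j
    have hsd : starSD j i = starSD i j := by
      rcases eq_or_ne i j with h | h
      · rw [h]
      · simp [starSD, Matrix.diagonal_apply_ne _ h, Matrix.diagonal_apply_ne _ (Ne.symm h)]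
    simp [hDc, Matrix.conjTranspose_apply, Matrix.map_apply, hsd, hf,
      Complex.coe_algebraMap, Complex.conj_ofReal]
  have hDD : Dc * Dc = 1 := by
    have h1 : starSD * starSD = 1 := by
      rw [starSD, Matrix.diagonal_mul_diagonal]
      ext i j
      rcases eq_or_ne i j with h | h
      · subst h
        fin_cases i <;> norm_num
      · simp [Matrix.diagonal_apply_ne _ h, Matrix.one_apply_ne h]
    rw [hDc, ← Matrix.map_mul, h1]
    simp
  set u : Fin 6 → ℂ := Ac *ᵥ v with hu
  set q : ℂ := star u ⬝ᵥ u with hq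
  set d : ℂ := star v ⬝ᵥ (Dc *ᵥ v) with hd
  -- the quadratic form identity
  have key : q + s * d = 0 := by
    have h0 : star v ⬝ᵥ ((Mc + s • Dc) *ᵥ v) = 0 := by rw [hveq, dotProduct_zero]
    have h1 : star v ⬝ᵥ (Mc *ᵥ v) = q := by
      rw [← hAA, ← Matrix.mulVec_mulVec, hq, hu]
      rw [Matrix.star_mulVec, hAherm, ← Matrix.dotProduct_mulVec]
    rw [Matrix.add_mulVec, dotProduct_add, h1, Matrix.smul_mulVec,
      dotProduct_smul, smul_eq_mul] at h0
    exact h0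
  -- q and d are real
  have hqim : q.im = 0 := by
    have : star q = q := by
      rw [hq]
      exact (Matrix.star_dotProduct u u).symm
    exact Complex.conj_eq_iff_im.mp this
  have hdim : d.im = 0 := by
    have : star d = d := by
      have h2 : star (Dc *ᵥ v) ⬝ᵥ v = d := by
        rw [Matrix.star_mulVec, hDherm, ← Matrix.dotProduct_mulVec, hd]
      have h3 : star (Dc *ᵥ v) ⬝ᵥ v = star d := by
        rw [Matrix.star_dotProduct, hd]
      exact h3.symm.trans h2
    exact Complex.conj_eq_iff_im.mp this
  have hsim : s.im = 0 := by
    rcases eq_or_ne d 0 with hd0 | hd0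
    · -- then q = 0, so u = 0, so M v = 0, so s • (Dc v) = 0 with Dc v ≠ 0
      have hq0 : q = 0 := by rw [hd0, mul_zero, add_zero] at key; exact key
      have hu0 : u = 0 := dotProduct_star_self_eq_zero.mp hq0
      have hMv : Mc *ᵥ v = 0 := by
        rw [← hAA, ← Matrix.mulVec_mulVec, ← hu, hu0, Matrix.mulVec_zero]
      have hsv : s • (Dc *ᵥ v) = 0 := by
        have := hveq
        rw [Matrix.add_mulVec, hMv, zero_add, Matrix.smul_mulVec] at this
        exact this
      have hDv : Dc *ᵥ v ≠ 0 := by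
        intro hc
        apply hv0
        have : (Dc * Dc) *ᵥ v = 0 := by
          rw [← Matrix.mulVec_mulVec, hc, Matrix.mulVec_zero]
        rwa [hDD, Matrix.one_mulVec] at this
      rcases smul_eq_zero.mp hsv with h | h
      · simp [h]
      · exact absurd h hDv
    · have hsval : s = -q / d := by
        rw [eq_div_iff hd0]
        linear_combination key
      rw [hsval]
      simp [Complex.div_im, hqim, hdim]
  have hzx : z = (x : ℂ) + s := by rw [hs]; ring
  rw [hzx]
  simp [Complex.add_im, Complex.ofReal_im, hsim]
end
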